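/- Let F: ℝ → ℂ^{m×m} be a continuous 2π-periodic matrix-valued function and let T_n(F) be the nm×nm block Toeplitz matrix whose (i,j) block is the matrix Fourier coefficient (1/2π)∫_0^{2π} e^{−i(i−j)ω} F(ω) dω. Then σ_1(T_n(F)) ≤ sup_{ω ∈ [0,2π]} σ_1(F(ω)). -/

import Mathlib

open scoped BigOperators

/-- Euclidean norm of a complex vector. -/
noncomputable def vnorm {ι : Type*} [Fintype ι] (v : ι → ℂ) : ℝ :=
  Real.sqrt (∑ i, ‖v i‖ ^ 2)

/-- Largest singular value (ℓ²→ℓ² operator norm) of a complex matrix. -/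
noncomputable def sval1 {ι κ : Type*} [Fintype ι] [Fintype κ] (A : Matrix ι κ ℂ) : ℝ :=
  ⨆ v : {v : κ → ℂ // vnorm v ≤ 1}, vnorm (A.mulVec v.1)

/-- The `nm × nm` block Toeplitz matrix generated by a matrix-valued function `F`:
    block `(i,j)` is the matrix Fourier coefficient `(1/2π)∫₀^{2π} e^{−i(i−j)ω} F(ω) dω`. -/
noncomputable def blockToep (n m : ℕ) (F : ℝ → Matrix (Fin m) (Fin m) ℂ) :
    Matrix (Fin n × Fin m) (Fin n × Fin m) ℂ :=
  Matrix.of fun p q => (2 * (Real.pi : ℂ))⁻¹ *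
    ∫ ω in (0:ℝ)..(2 * Real.pi),
      Complex.exp (-Complex.I * (((p.1 : ℤ) - (q.1 : ℤ) : ℤ) : ℂ) * (ω : ℂ)) * F ω p.2 q.2

open scoped Real
open Complex MeasureTheory intervalIntegral

-- basic vnorm lemmas
lemma vnorm_nonneg {ι : Type*} [Fintype ι] (v : ι → ℂ) : 0 ≤ vnorm v := Real.sqrt_nonneg _

lemma vnorm_sq {ι : Type*} [Fintype ι] (v : ι → ℂ) : vnorm v ^ 2 = ∑ i, ‖v i‖ ^ 2 := by
  rw [vnorm, Real.sq_sqrt]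
  positivity

lemma abs_le_vnorm {ι : Type*} [Fintype ι] (v : ι → ℂ) (i : ι) : ‖v i‖ ≤ vnorm v := by
  rw [vnorm]
  have h1 : ‖v i‖ ^ 2 ≤ ∑ j, ‖v j‖ ^ 2 :=
    Finset.single_le_sum (f := fun j => ‖v j‖ ^ 2) (fun j _ => by positivity)
      (Finset.mem_univ i)
  calc ‖v i‖ = Real.sqrt (‖v i‖ ^ 2) := by
        rw [Real.sqrt_sq (norm_nonneg _)]
    _ ≤ _ := Real.sqrt_le_sqrt h1

lemma vnorm_zero {ι : Type*} [Fintype ι] : vnorm (0 : ι → ℂ) = 0 := by simp [vnorm]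

noncomputable def fro {ι κ : Type*} [Fintype ι] [Fintype κ] (A : Matrix ι κ ℂ) : ℝ :=
  Real.sqrt (∑ i, (∑ j, ‖A i j‖) ^ 2)

lemma fro_nonneg {ι κ : Type*} [Fintype ι] [Fintype κ] (A : Matrix ι κ ℂ) : 0 ≤ fro A :=
  Real.sqrt_nonneg _

lemma vnorm_mulVec_le_fro {ι κ : Type*} [Fintype ι] [Fintype κ] (A : Matrix ι κ ℂ)
    (w : κ → ℂ) : vnorm (A.mulVec w) ≤ fro A * vnorm w := by
  have key : ∀ i, ‖A.mulVec w i‖ ≤ (∑ j, ‖A i j‖) * vnorm w := by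
    intro i
    calc ‖A.mulVec w i‖ = ‖∑ j, A i j * w j‖ := by
          simp [Matrix.mulVec, dotProduct]
      _ ≤ ∑ j, ‖A i j * w j‖ := norm_sum_le _ _
      _ ≤ ∑ j, ‖A i j‖ * vnorm w := by
          refine Finset.sum_le_sum fun j _ => ?_
          rw [norm_mul]
          exact mul_le_mul_of_nonneg_left (abs_le_vnorm w j) (norm_nonneg _)
      _ = (∑ j, ‖A i j‖) * vnorm w := by rw [Finset.sum_mul]
  have h2 : vnorm (A.mulVec w) ^ 2 ≤ (fro A * vnorm w) ^ 2 := by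
    rw [vnorm_sq, mul_pow, fro, Real.sq_sqrt (by positivity), Finset.sum_mul]
    refine Finset.sum_le_sum fun i _ => ?_
    rw [← mul_pow]
    exact pow_le_pow_left₀ (norm_nonneg _) (key i) 2
  have := Real.sqrt_le_sqrt h2
  rwa [Real.sqrt_sq (vnorm_nonneg _), Real.sqrt_sq (mul_nonneg (fro_nonneg A) (vnorm_nonneg w))] at this

lemma sval1_bddAbove {ι κ : Type*} [Fintype ι] [Fintype κ] (A : Matrix ι κ ℂ) :
    BddAbove (Set.range fun v : {v : κ → ℂ // vnorm v ≤ 1} => vnorm (A.mulVec v.1)) := by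
  refine ⟨fro A, ?_⟩
  rintro x ⟨v, rfl⟩
  calc vnorm (A.mulVec v.1) ≤ fro A * vnorm v.1 := vnorm_mulVec_le_fro A v.1
    _ ≤ fro A * 1 := mul_le_mul_of_nonneg_left v.2 (fro_nonneg A)
    _ = fro A := mul_one _

instance sval1_nonempty {κ : Type*} [Fintype κ] : Nonempty {v : κ → ℂ // vnorm v ≤ 1} :=
  ⟨⟨0, by rw [vnorm_zero]; norm_num⟩⟩

lemma sval1_nonneg {ι κ : Type*} [Fintype ι] [Fintype κ] (A : Matrix ι κ ℂ) : 0 ≤ sval1 A := by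
  have h := le_ciSup (sval1_bddAbove A) ⟨0, by simp [vnorm_zero]⟩
  simp [Matrix.mulVec_zero, vnorm_zero] at h
  exact h

lemma sval1_le_fro {ι κ : Type*} [Fintype ι] [Fintype κ] (A : Matrix ι κ ℂ) :
    sval1 A ≤ fro A := by
  refine ciSup_le fun v => ?_
  calc vnorm (A.mulVec v.1) ≤ fro A * vnorm v.1 := vnorm_mulVec_le_fro A v.1
    _ ≤ fro A * 1 := mul_le_mul_of_nonneg_left v.2 (fro_nonneg A)
    _ = fro A := mul_one _

lemma vnorm_smul {ι : Type*} [Fintype ι] (c : ℂ) (v : ι → ℂ) :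
    vnorm (fun i => c * v i) = ‖c‖ * vnorm v := by
  unfold vnorm
  rw [← Real.sqrt_sq (norm_nonneg c), ← Real.sqrt_mul (by positivity), Finset.mul_sum]
  congr 1
  refine Finset.sum_congr rfl fun i _ => ?_
  rw [norm_mul, mul_pow]

lemma vnorm_mulVec_le_sval1 {ι κ : Type*} [Fintype ι] [Fintype κ] (A : Matrix ι κ ℂ)
    (w : κ → ℂ) : vnorm (A.mulVec w) ≤ sval1 A * vnorm w := by
  rcases eq_or_ne (vnorm w) 0 with h0 | h0
  · have hw : w = 0 := by
      funext i
      have h1 := abs_le_vnorm w i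
      rw [h0] at h1
      have := norm_nonneg (w i)
      have : ‖w i‖ = 0 := le_antisymm h1 this
      simpa using this
    simp [hw, Matrix.mulVec_zero, vnorm_zero, h0]
  · have hpos : 0 < vnorm w := lt_of_le_of_ne (vnorm_nonneg w) (Ne.symm h0)
    set u : κ → ℂ := fun i => ((vnorm w : ℝ) : ℂ)⁻¹ * w i with hu
    have hvu : vnorm u = 1 := by
      rw [hu, vnorm_smul, norm_inv, Complex.norm_real, Real.norm_eq_abs, abs_of_pos hpos,
        inv_mul_cancel₀ h0]
    have hmem : vnorm u ≤ 1 := le_of_eq hvu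
    have hle := le_ciSup (sval1_bddAbove A) ⟨u, hmem⟩
    have hAu : A.mulVec u = fun i => ((vnorm w : ℝ) : ℂ)⁻¹ * A.mulVec w i := by
      funext i
      simp only [hu, Matrix.mulVec, dotProduct, Finset.mul_sum]
      exact Finset.sum_congr rfl fun j _ => by ring
    have : vnorm (A.mulVec u) = (vnorm w)⁻¹ * vnorm (A.mulVec w) := by
      rw [hAu, vnorm_smul, norm_inv, Complex.norm_real, Real.norm_eq_abs, abs_of_pos hpos]
    rw [this] at hle
    have := mul_le_mul_of_nonneg_right hle (le_of_lt hpos)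
    rwa [inv_mul_eq_div, div_mul_cancel₀ _ h0] at this

lemma orth (a : ℤ) :
    (∫ ω in (0:ℝ)..(2*Real.pi), Complex.exp (Complex.I * a * ω)) =
      if a = 0 then ((2*Real.pi : ℝ) : ℂ) else 0 := by
  rcases eq_or_ne a 0 with h | h
  · simp [h]
  · rw [if_neg h]
    have hc : (Complex.I * a) ≠ 0 := by
      simp [Complex.I_ne_zero, Complex.ext_iff]
      exact_mod_cast h
    rw [integral_exp_mul_complex hc]
    have h1 : Complex.I * a * ((2*Real.pi : ℝ) : ℂ) = a * (2 * Real.pi * Complex.I) := by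
      push_cast; ring
    have h2 : Complex.I * a * ((0:ℝ) : ℂ) = 0 := by push_cast; ring
    rw [h1, h2, Complex.exp_int_mul_two_pi_mul_I, Complex.exp_zero, sub_self, zero_div]

-- cross orthogonality for two modes from Fin n
lemma orth2 {n : ℕ} (k l : Fin n) :
    (∫ ω in (0:ℝ)..(2*Real.pi),
      Complex.exp (-Complex.I * k * ω) * Complex.exp (Complex.I * l * ω)) =
      if l = k then ((2*Real.pi : ℝ) : ℂ) else 0 := by
  have heq : ∀ ω : ℝ, Complex.exp (-Complex.I * k * ω) * Complex.exp (Complex.I * l * ω)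
      = Complex.exp (Complex.I * ((l : ℤ) - (k : ℤ) : ℤ) * ω) := by
    intro ω
    rw [← Complex.exp_add]
    congr 1
    push_cast
    ring
  simp only [heq]
  rw [orth]
  have : ((l : ℤ) - (k : ℤ) = 0) ↔ (l = k) := by
    constructor
    · intro h
      have : (l : ℤ) = (k : ℤ) := by omega
      exact Fin.ext (by exact_mod_cast this)
    · intro h; rw [h]; ring
  simp [this]

-- integral of |trig polynomial|^2, complex version
lemma trig_conj {n : ℕ} (c : Fin n → ℂ) (ω : ℝ) :
    (starRingEnd ℂ) (∑ k, c k * Complex.exp (Complex.I * k * ω)) =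
      ∑ k, (starRingEnd ℂ) (c k) * Complex.exp (-Complex.I * k * ω) := by
  rw [map_sum]
  refine Finset.sum_congr rfl fun k _ => ?_
  rw [map_mul, ← Complex.exp_conj]
  congr 1
  simp [Complex.ext_iff]

lemma trig_sq_integral_complex {n : ℕ} (c : Fin n → ℂ) :
    (∫ ω in (0:ℝ)..(2*Real.pi),
        (∑ k, c k * Complex.exp (Complex.I * k * ω)) *
          (starRingEnd ℂ) (∑ k, c k * Complex.exp (Complex.I * k * ω)))
      = ((2*Real.pi : ℝ) : ℂ) * ∑ k, (‖c k‖ : ℂ) ^ 2 := by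
  have heq : ∀ ω : ℝ, (∑ k, c k * Complex.exp (Complex.I * k * ω)) *
      (starRingEnd ℂ) (∑ k, c k * Complex.exp (Complex.I * k * ω))
      = ∑ k : Fin n, ∑ l : Fin n, (c k * (starRingEnd ℂ) (c l)) *
          (Complex.exp (-Complex.I * l * ω) * Complex.exp (Complex.I * k * ω)) := by
    intro ω
    rw [trig_conj, Finset.sum_mul_sum]
    refine Finset.sum_congr rfl fun k _ => Finset.sum_congr rfl fun l _ => by ring
  simp only [heq]
  rw [intervalIntegral.integral_finset_sum]
  · have inner : ∀ k : Fin n, (∫ ω in (0:ℝ)..(2*Real.pi), ∑ l : Fin n,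
        (c k * (starRingEnd ℂ) (c l)) *
          (Complex.exp (-Complex.I * l * ω) * Complex.exp (Complex.I * k * ω)))
        = ((2*Real.pi : ℝ) : ℂ) * (‖c k‖ : ℂ) ^ 2 := by
      intro k
      rw [intervalIntegral.integral_finset_sum]
      · have term : ∀ l : Fin n, (∫ ω in (0:ℝ)..(2*Real.pi),
            (c k * (starRingEnd ℂ) (c l)) *
              (Complex.exp (-Complex.I * l * ω) * Complex.exp (Complex.I * k * ω)))
            = (c k * (starRingEnd ℂ) (c l)) * (if k = l then ((2*Real.pi : ℝ) : ℂ) else 0) := by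
          intro l
          rw [intervalIntegral.integral_const_mul, orth2]
        simp only [term, mul_ite, mul_zero]
        rw [Finset.sum_ite_eq (Finset.univ : Finset (Fin n)) k
          (fun l => c k * (starRingEnd ℂ) (c l) * ((2*Real.pi : ℝ) : ℂ))]
        simp only [Finset.mem_univ, if_true]
        rw [Complex.mul_conj, Complex.normSq_eq_norm_sq]
        push_cast
        ring
      · intro l _
        apply Continuous.intervalIntegrable
        fun_prop
    simp only [inner, ← Finset.mul_sum]
  · intro k _
    apply Continuous.intervalIntegrable
    apply continuous_finset_sum
    intro l _
    fun_prop

lemma two_pi_pos : (0:ℝ) < 2 * Real.pi := by positivity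

lemma intervalIntegral_re {f : ℝ → ℂ} (hf : IntervalIntegrable f volume 0 (2*Real.pi)) :
    ∫ ω in (0:ℝ)..(2*Real.pi), (f ω).re = (∫ ω in (0:ℝ)..(2*Real.pi), f ω).re := by
  rw [intervalIntegral.integral_of_le two_pi_pos.le, intervalIntegral.integral_of_le two_pi_pos.le]
  simpa using integral_re hf.1

lemma trig_sq_integral_real {n : ℕ} (c : Fin n → ℂ) :
    (∫ ω in (0:ℝ)..(2*Real.pi),
        ‖∑ k, c k * Complex.exp (Complex.I * k * ω)‖ ^ 2)
      = (2*Real.pi) * ∑ k, ‖c k‖ ^ 2 := by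
  have h1 := trig_sq_integral_complex c
  have h2 : ∀ ω : ℝ, (∑ k, c k * Complex.exp (Complex.I * k * ω)) *
      (starRingEnd ℂ) (∑ k, c k * Complex.exp (Complex.I * k * ω))
      = ((‖∑ k, c k * Complex.exp (Complex.I * k * ω)‖ ^ 2 : ℝ) : ℂ) := by
    intro ω
    rw [Complex.mul_conj, Complex.normSq_eq_norm_sq]
  simp only [h2] at h1
  rw [intervalIntegral.integral_ofReal] at h1
  have h3 : (((2*Real.pi) * ∑ k, ‖c k‖ ^ 2 : ℝ) : ℂ)
      = ((2*Real.pi : ℝ) : ℂ) * ∑ k, (‖c k‖ : ℂ) ^ 2 := by push_cast; ring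
  exact_mod_cast h1.trans h3.symm

lemma bessel {n : ℕ} (g : ℝ → ℂ) (hg : Continuous g) :
    ∑ k : Fin n, ‖(2*(Real.pi:ℂ))⁻¹ * ∫ ω in (0:ℝ)..(2*Real.pi),
        Complex.exp (-Complex.I * k * ω) * g ω‖ ^ 2
      ≤ (2*Real.pi)⁻¹ * ∫ ω in (0:ℝ)..(2*Real.pi), ‖g ω‖ ^ 2 := by
  set tp : ℝ := 2 * Real.pi with htp
  have htpc : ((tp:ℝ):ℂ) = 2*(Real.pi:ℂ) := by norm_cast
  have htpne : ((tp:ℝ):ℂ) ≠ 0 := by exact_mod_cast two_pi_pos.ne'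
  have h2pine : (2*(Real.pi:ℂ)) ≠ 0 := by rw [← htpc]; exact htpne
  set c : Fin n → ℂ := fun k => (2*(Real.pi:ℂ))⁻¹ * ∫ ω in (0:ℝ)..tp,
      Complex.exp (-Complex.I * k * ω) * g ω with hc
  set s : ℝ → ℂ := fun ω => ∑ k, c k * Complex.exp (Complex.I * k * ω) with hs
  have hscont : Continuous s := by
    apply continuous_finset_sum; intro k _; fun_prop
  set S : ℝ := ∑ k, ‖c k‖ ^ 2 with hS
  have hS0 : 0 ≤ S := Finset.sum_nonneg fun k _ => by positivity
  -- (A)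
  have hA : ∀ k : Fin n, (∫ ω in (0:ℝ)..tp, Complex.exp (-Complex.I * k * ω) * g ω)
      = ((tp:ℝ):ℂ) * c k := by
    intro k
    simp only [hc, htpc]
    rw [← mul_assoc, mul_inv_cancel₀ h2pine, one_mul]
  -- (B)
  have hB : (∫ ω in (0:ℝ)..tp, g ω * (starRingEnd ℂ) (s ω)) = ((tp:ℝ):ℂ) * ((S:ℝ):ℂ) := by
    have hexp : ∀ ω : ℝ, g ω * (starRingEnd ℂ) (s ω)
        = ∑ k : Fin n, (starRingEnd ℂ) (c k) * (Complex.exp (-Complex.I * k * ω) * g ω) := by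
      intro ω
      rw [hs]
      simp only [map_sum, map_mul, Finset.mul_sum]
      refine Finset.sum_congr rfl fun k _ => ?_
      rw [← Complex.exp_conj]
      have : (starRingEnd ℂ) (Complex.I * k * ω) = -Complex.I * k * ω := by
        simp [Complex.ext_iff]
      rw [this]; ring
    simp only [hexp]
    rw [intervalIntegral.integral_finset_sum]
    · have term : ∀ k : Fin n, (∫ ω in (0:ℝ)..tp,
          (starRingEnd ℂ) (c k) * (Complex.exp (-Complex.I * k * ω) * g ω))
          = ((tp:ℝ):ℂ) * ((‖c k‖ : ℝ) : ℂ)^2 := by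
        intro k
        rw [intervalIntegral.integral_const_mul, hA k]
        rw [mul_comm ((starRingEnd ℂ) (c k)), mul_assoc, Complex.mul_conj, Complex.normSq_eq_norm_sq]
        push_cast; ring
      simp only [term, ← Finset.mul_sum]
      congr 1
      rw [hS]; push_cast; ring
    · intro k _
      apply Continuous.intervalIntegrable
      fun_prop
  -- expansion: |g - s|^2 = |g|^2 - 2 re(g conj s) + |s|^2
  have hpt : ∀ ω : ℝ, ‖g ω - s ω‖ ^ 2
      = ‖g ω‖ ^ 2 - 2 * (g ω * (starRingEnd ℂ) (s ω)).re
        + ‖s ω‖ ^ 2 := by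
    intro ω
    have h := Complex.normSq_sub (g ω) (s ω)
    simp only [← Complex.sq_norm] at h
    linarith
  -- integrability facts
  have int1 : IntervalIntegrable (fun ω => ‖g ω‖ ^ 2) volume 0 tp :=
    (Continuous.pow (continuous_norm.comp hg) 2).intervalIntegrable _ _
  have hconj : Continuous fun ω => g ω * (starRingEnd ℂ) (s ω) :=
    hg.mul (Complex.continuous_conj.comp hscont)
  have int2 : IntervalIntegrable (fun ω => 2 * (g ω * (starRingEnd ℂ) (s ω)).re) volume 0 tp :=
    ((continuous_const.mul (Complex.continuous_re.comp hconj))).intervalIntegrable _ _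
  have int3 : IntervalIntegrable (fun ω => ‖s ω‖ ^ 2) volume 0 tp :=
    (Continuous.pow (continuous_norm.comp hscont) 2).intervalIntegrable _ _
  have hnn : (0:ℝ) ≤ ∫ ω in (0:ℝ)..tp, ‖g ω - s ω‖ ^ 2 := by
    apply intervalIntegral.integral_nonneg two_pi_pos.le
    intro ω _
    positivity
  have hre : (∫ ω in (0:ℝ)..tp, (g ω * (starRingEnd ℂ) (s ω)).re) = tp * S := by
    rw [intervalIntegral_re (hconj.intervalIntegrable _ _), hB]
    simp [Complex.ofReal_mul]
  have hsint : (∫ ω in (0:ℝ)..tp, ‖s ω‖ ^ 2) = tp * S := by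
    rw [hs]
    exact trig_sq_integral_real c
  have expand : (∫ ω in (0:ℝ)..tp, ‖g ω - s ω‖ ^ 2)
      = (∫ ω in (0:ℝ)..tp, ‖g ω‖ ^ 2) - 2 * (tp * S) + tp * S := by
    simp only [hpt]
    rw [intervalIntegral.integral_add (int1.sub int2) int3,
      intervalIntegral.integral_sub int1 int2, hsint,
      intervalIntegral.integral_const_mul, hre]
  rw [expand] at hnn
  have key : tp * S ≤ ∫ ω in (0:ℝ)..tp, ‖g ω‖ ^ 2 := by linarith
  have := mul_le_mul_of_nonneg_left key (le_of_lt (inv_pos.mpr two_pi_pos))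
  rw [← mul_assoc, inv_mul_cancel₀ two_pi_pos.ne', one_mul] at this
  exact this

lemma cont_exp_mul (c : ℂ) : Continuous fun ω : ℝ => Complex.exp (c * ω) := by fun_prop

lemma toep_mulVec (n m : ℕ) (F : ℝ → Matrix (Fin m) (Fin m) ℂ) (hF : Continuous F)
    (v : Fin n × Fin m → ℂ) (p : Fin n × Fin m) :
    (blockToep n m F).mulVec v p
      = (2*(Real.pi:ℂ))⁻¹ * ∫ ω in (0:ℝ)..(2*Real.pi),
          Complex.exp (-Complex.I * p.1 * ω) *
            ((F ω).mulVec (fun j => ∑ k : Fin n, v (k, j) * Complex.exp (Complex.I * k * ω)) p.2) := by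
  have hcont : ∀ q : Fin n × Fin m, Continuous fun ω : ℝ =>
      Complex.exp (-Complex.I * p.1 * ω) *
        (Complex.exp (Complex.I * q.1 * ω) * (F ω p.2 q.2 * v q)) :=
    fun q => (cont_exp_mul _).mul ((cont_exp_mul _).mul ((hF.matrix_elem _ _).mul continuous_const))
  have step1 : ∀ q : Fin n × Fin m,
      (blockToep n m F) p q * v q
        = (2*(Real.pi:ℂ))⁻¹ * ∫ ω in (0:ℝ)..(2*Real.pi),
            Complex.exp (-Complex.I * p.1 * ω) *
              (Complex.exp (Complex.I * q.1 * ω) * (F ω p.2 q.2 * v q)) := by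
    intro q
    show ((2 * (Real.pi : ℂ))⁻¹ * ∫ ω in (0:ℝ)..(2 * Real.pi),
        Complex.exp (-Complex.I * (((p.1 : ℤ) - (q.1 : ℤ) : ℤ) : ℂ) * (ω : ℂ)) * F ω p.2 q.2) * v q = _
    rw [mul_assoc, ← intervalIntegral.integral_mul_const]
    congr 1
    apply intervalIntegral.integral_congr
    intro ω _
    have hexp : Complex.exp (-Complex.I * (((p.1 : ℤ) - (q.1 : ℤ) : ℤ) : ℂ) * (ω : ℂ))
        = Complex.exp (-Complex.I * p.1 * ω) * Complex.exp (Complex.I * q.1 * ω) := by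
      rw [← Complex.exp_add]; congr 1; push_cast; ring
    show Complex.exp (-Complex.I * (((p.1 : ℤ) - (q.1 : ℤ) : ℤ) : ℂ) * (ω : ℂ)) * F ω p.2 q.2 * v q = _
    rw [hexp]; ring
  calc (blockToep n m F).mulVec v p = ∑ q, blockToep n m F p q * v q := by
        simp [Matrix.mulVec, dotProduct]
    _ = ∑ q : Fin n × Fin m, (2*(Real.pi:ℂ))⁻¹ * ∫ ω in (0:ℝ)..(2*Real.pi),
          Complex.exp (-Complex.I * p.1 * ω) *
            (Complex.exp (Complex.I * q.1 * ω) * (F ω p.2 q.2 * v q)) :=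
        Finset.sum_congr rfl fun q _ => step1 q
    _ = (2*(Real.pi:ℂ))⁻¹ * ∑ q : Fin n × Fin m, ∫ ω in (0:ℝ)..(2*Real.pi),
          Complex.exp (-Complex.I * p.1 * ω) *
            (Complex.exp (Complex.I * q.1 * ω) * (F ω p.2 q.2 * v q)) := by
        rw [← Finset.mul_sum]
    _ = (2*(Real.pi:ℂ))⁻¹ * ∫ ω in (0:ℝ)..(2*Real.pi), ∑ q : Fin n × Fin m,
          Complex.exp (-Complex.I * p.1 * ω) *
            (Complex.exp (Complex.I * q.1 * ω) * (F ω p.2 q.2 * v q)) := by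
        rw [← intervalIntegral.integral_finset_sum
          (fun q _ => (hcont q).intervalIntegrable _ _)]
    _ = _ := by
        congr 1
        apply intervalIntegral.integral_congr
        intro ω _
        simp only [Matrix.mulVec, dotProduct, Fintype.sum_prod_type, Finset.mul_sum]
        rw [Finset.sum_comm]
        refine Finset.sum_congr rfl fun k _ => Finset.sum_congr rfl fun j _ => by ring


/-- Bound on the largest singular value of a block Toeplitz matrix in terms of its
    matrix-valued generating function: `σ₁(T_n(F)) ≤ sup_{ω ∈ [0,2π]} σ₁(F(ω))`. -/
theorem block_toeplitz_sval_bound (n m : ℕ) (F : ℝ → Matrix (Fin m) (Fin m) ℂ)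
    (hF : Continuous F) (hper : Function.Periodic F (2 * Real.pi)) :
    sval1 (blockToep n m F) ≤ ⨆ ω : Set.Icc (0 : ℝ) (2 * Real.pi), sval1 (F ω) := by
  set M := ⨆ ω : Set.Icc (0 : ℝ) (2 * Real.pi), sval1 (F ω) with hMdef
  -- boundedness of RHS
  have helem : ∀ i j, Continuous fun ω => ‖F ω i j‖ :=
    fun i j => continuous_norm.comp (hF.matrix_elem i j)
  have hfro : Continuous fun ω => fro (F ω) :=
    Real.continuous_sqrt.comp (continuous_finset_sum _ fun i _ =>
      ((continuous_finset_sum _ fun j _ => helem i j).pow 2))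
  obtain ⟨x, hxmem, hxmax'⟩ := (isCompact_Icc (a := (0:ℝ)) (b := 2*Real.pi)).exists_isMaxOn
    ⟨0, by constructor <;> [rfl; exact two_pi_pos.le]⟩ hfro.continuousOn
  have hxmax : ∀ ω ∈ Set.Icc (0:ℝ) (2*Real.pi), fro (F ω) ≤ fro (F x) := fun ω hω => hxmax' hω
  have hbdd : BddAbove (Set.range fun ω : Set.Icc (0:ℝ) (2*Real.pi) => sval1 (F ω)) := by
    refine ⟨fro (F x), ?_⟩
    rintro r ⟨ω, rfl⟩
    exact (sval1_le_fro _).trans (hxmax ω ω.2)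
  have hMle : ∀ ω : ℝ, ω ∈ Set.Icc (0:ℝ) (2*Real.pi) → sval1 (F ω) ≤ M :=
    fun ω hω => le_ciSup hbdd (⟨ω, hω⟩ : Set.Icc (0:ℝ) (2*Real.pi))
  have hM0 : 0 ≤ M :=
    (sval1_nonneg (F 0)).trans (hMle 0 ⟨le_refl _, two_pi_pos.le⟩)
  -- main bound
  refine ciSup_le ?_
  rintro ⟨v, hv⟩
  simp only
  set V : ℝ → (Fin m → ℂ) := fun ω j => ∑ k : Fin n, v (k, j) * Complex.exp (Complex.I * k * ω)
    with hVdef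
  set G : ℝ → (Fin m → ℂ) := fun ω => (F ω).mulVec (V ω) with hGdef
  have hVcont : ∀ j, Continuous fun ω => V ω j := by
    intro j
    apply continuous_finset_sum
    intro k _
    exact continuous_const.mul (cont_exp_mul _)
  have hGcont : ∀ j, Continuous fun ω => G ω j := by
    intro j
    simp only [hGdef, Matrix.mulVec, dotProduct]
    exact continuous_finset_sum _ fun l _ => (hF.matrix_elem j l).mul (hVcont l)
  have hGint : ∀ j : Fin m, IntervalIntegrable (fun ω => ‖G ω j‖ ^ 2)
      volume 0 (2*Real.pi) :=
    fun j => ((continuous_norm.comp (hGcont j)).pow 2).intervalIntegrable _ _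
  have hVabs : ∀ j, Continuous fun ω => ‖V ω j‖ ^ 2 :=
    fun j => (continuous_norm.comp (hVcont j)).pow 2
  have hVint : IntervalIntegrable (fun ω => M^2 * ∑ j, ‖V ω j‖ ^ 2)
      volume 0 (2*Real.pi) := by
    apply Continuous.intervalIntegrable
    exact continuous_const.mul (continuous_finset_sum _ fun j _ =>
      (continuous_norm.comp (hVcont j)).pow 2)
  have hpoint : ∀ ω ∈ Set.Icc (0:ℝ) (2*Real.pi),
      (∑ j, ‖G ω j‖ ^ 2) ≤ M^2 * ∑ j, ‖V ω j‖ ^ 2 := by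
    intro ω hω
    have h1 : vnorm (G ω) ≤ M * vnorm (V ω) := by
      calc vnorm (G ω) ≤ sval1 (F ω) * vnorm (V ω) := vnorm_mulVec_le_sval1 _ _
        _ ≤ M * vnorm (V ω) :=
          mul_le_mul_of_nonneg_right (hMle ω hω) (vnorm_nonneg _)
    have h2 : vnorm (G ω) ^ 2 ≤ (M * vnorm (V ω)) ^ 2 :=
      pow_le_pow_left₀ (vnorm_nonneg _) h1 2
    rw [vnorm_sq] at h2
    calc (∑ j, ‖G ω j‖ ^ 2) ≤ (M * vnorm (V ω))^2 := h2
      _ = M^2 * vnorm (V ω) ^ 2 := by ring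
      _ = M^2 * ∑ j, ‖V ω j‖ ^ 2 := by rw [vnorm_sq]
  have hsq : vnorm ((blockToep n m F).mulVec v) ^ 2 ≤ M ^ 2 := by
    calc vnorm ((blockToep n m F).mulVec v) ^ 2
        = ∑ p : Fin n × Fin m, ‖(blockToep n m F).mulVec v p‖ ^ 2 := vnorm_sq _
      _ = ∑ k : Fin n, ∑ j : Fin m, ‖(2*(Real.pi:ℂ))⁻¹ *
            ∫ ω in (0:ℝ)..(2*Real.pi),
              Complex.exp (-Complex.I * k * ω) * G ω j‖ ^ 2 := by
          rw [Fintype.sum_prod_type]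
          exact Finset.sum_congr rfl fun k _ => Finset.sum_congr rfl fun j _ => by
            rw [toep_mulVec n m F hF v (k, j)]
      _ = ∑ j : Fin m, ∑ k : Fin n, ‖(2*(Real.pi:ℂ))⁻¹ *
            ∫ ω in (0:ℝ)..(2*Real.pi),
              Complex.exp (-Complex.I * k * ω) * G ω j‖ ^ 2 := Finset.sum_comm
      _ ≤ ∑ j : Fin m, (2*Real.pi)⁻¹ * ∫ ω in (0:ℝ)..(2*Real.pi),
            ‖G ω j‖ ^ 2 :=
          Finset.sum_le_sum fun j _ => bessel (fun ω => G ω j) (hGcont j)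
      _ = (2*Real.pi)⁻¹ * ∫ ω in (0:ℝ)..(2*Real.pi), ∑ j, ‖G ω j‖ ^ 2 := by
          rw [← Finset.mul_sum, ← intervalIntegral.integral_finset_sum fun j _ => hGint j]
      _ ≤ (2*Real.pi)⁻¹ * ∫ ω in (0:ℝ)..(2*Real.pi),
            M^2 * ∑ j, ‖V ω j‖ ^ 2 := by
          refine mul_le_mul_of_nonneg_left ?_ (inv_pos.mpr two_pi_pos).le
          exact intervalIntegral.integral_mono_on two_pi_pos.le
            ((continuous_finset_sum _ fun j _ =>
              (continuous_norm.comp (hGcont j)).pow 2).intervalIntegrable _ _)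
            hVint hpoint
      _ = (2*Real.pi)⁻¹ * (M^2 * (2*Real.pi) * ∑ j : Fin m, ∑ k : Fin n,
            ‖v (k, j)‖ ^ 2) := by
          rw [intervalIntegral.integral_const_mul]
          rw [intervalIntegral.integral_finset_sum fun j _ =>
            (hVabs j).intervalIntegrable _ _]
          have : ∀ j : Fin m, (∫ ω in (0:ℝ)..(2*Real.pi), ‖V ω j‖ ^ 2)
              = (2*Real.pi) * ∑ k : Fin n, ‖v (k, j)‖ ^ 2 :=
            fun j => trig_sq_integral_real (fun k => v (k, j))
          simp only [this, ← Finset.mul_sum]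
          ring
      _ = M^2 * vnorm v ^ 2 := by
          rw [vnorm_sq, Fintype.sum_prod_type, Finset.sum_comm]
          field_simp
      _ ≤ M^2 * 1 := by
          refine mul_le_mul_of_nonneg_left ?_ (by positivity)
          calc vnorm v ^ 2 ≤ 1^2 := pow_le_pow_left₀ (vnorm_nonneg v) hv 2
            _ = 1 := one_pow 2
      _ = M^2 := mul_one _
  have := Real.sqrt_le_sqrt hsq
  rwa [Real.sqrt_sq (vnorm_nonneg _), Real.sqrt_sq hM0] at this
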